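/- Suppose G > 0, D > 0 and (H, Γ) is differentiable and solves H + (GH³/3)H' − (H²/2)σ'(Γ)Γ' = H* and Γ + (GH²/2)ΓH' − (HΓσ'(Γ) − D)Γ' = 0 with H > 0, 0 < Γ < 1 and σ'(Γ) < 0. Then (H, Γ) solves the explicit first-order system H' = [6ΓH(2H* − H) − 12D(H − H*)ϱ(Γ)] / [GH³(ΓH + 4Dϱ(Γ))] and Γ' = 2Γ(H − 3H*)ϱ(Γ) / [H(ΓH + 4Dϱ(Γ))], where ϱ = −1/σ'. In particular the denominator ΓH + 4Dϱ(Γ) is strictly positive. -/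
import Mathlib


open Set

/-- With G, D > 0, the traveling wave system is equivalent to an explicit
first-order system with positive denominator, where ϱ = −1/σ'. -/
theorem stmt_13 (G D Hstar : ℝ) (hG : 0 < G) (hD : 0 < D) (hHstar : 0 < Hstar)
    (σ' ϱ : ℝ → ℝ)
    (hσ'neg : ∀ z ∈ Ico (0:ℝ) 1, σ' z < 0)
    (hϱ : ∀ z ∈ Ico (0:ℝ) 1, ϱ z = -1 / σ' z)
    (H Γ H' Γ' : ℝ → ℝ)
    (hHpos : ∀ ξ, 0 < H ξ) (hΓrange : ∀ ξ, Γ ξ ∈ Ioo (0:ℝ) 1)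
    (hHd : ∀ ξ, HasDerivAt H (H' ξ) ξ)
    (hΓd : ∀ ξ, HasDerivAt Γ (Γ' ξ) ξ)
    (heq1 : ∀ ξ, H ξ + G * (H ξ)^3 / 3 * H' ξ
        - (H ξ)^2 / 2 * σ' (Γ ξ) * Γ' ξ = Hstar)
    (heq2 : ∀ ξ, Γ ξ + G * (H ξ)^2 / 2 * Γ ξ * H' ξ
        - (H ξ * Γ ξ * σ' (Γ ξ) - D) * Γ' ξ = 0) :
    ∀ ξ, 0 < Γ ξ * H ξ + 4 * D * ϱ (Γ ξ) ∧
      H' ξ = (6 * Γ ξ * H ξ * (2 * Hstar - H ξ)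
          - 12 * D * (H ξ - Hstar) * ϱ (Γ ξ))
        / (G * (H ξ)^3 * (Γ ξ * H ξ + 4 * D * ϱ (Γ ξ))) ∧
      Γ' ξ = 2 * Γ ξ * (H ξ - 3 * Hstar) * ϱ (Γ ξ)
        / (H ξ * (Γ ξ * H ξ + 4 * D * ϱ (Γ ξ))) := by
  intro ξ
  set h := H ξ with hh
  set g := Γ ξ with hg
  set s := σ' (Γ ξ) with hs
  set r := ϱ (Γ ξ) with hr
  set x := H' ξ with hx
  set y := Γ' ξ with hy
  have hgmem : Γ ξ ∈ Ico (0:ℝ) 1 := ⟨(hΓrange ξ).1.le, (hΓrange ξ).2⟩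
  have hsneg : s < 0 := hσ'neg _ hgmem
  have hsne : s ≠ 0 := ne_of_lt hsneg
  have hrdef : r = -1 / s := hϱ _ hgmem
  have hsr : s * r = -1 := by rw [hrdef]; field_simp
  have hrpos : 0 < r := by
    rw [hrdef]; exact div_pos_of_neg_of_neg (by norm_num) hsneg
  have hhpos : 0 < h := hHpos ξ
  have hgpos : 0 < g := (hΓrange ξ).1
  have hdenpos : 0 < g * h + 4 * D * r := by positivity
  have e1 : h + G * h^3 / 3 * x - h^2 / 2 * s * y = Hstar := heq1 ξ
  have e2 : g + G * h^2 / 2 * g * x - (h * g * s - D) * y = 0 := heq2 ξ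
  refine ⟨hdenpos, ?_, ?_⟩
  · rw [eq_div_iff (by positivity)]
    linear_combination (12*r*(D - h*g*s)) * e1 + (6*r*h^2*s) * e2
      + (x*G*h^4*g - 12*g*h*Hstar + 6*g*h^2) * hsr
  · rw [eq_div_iff (by positivity)]
    linear_combination (-6*r*g) * e1 + (4*r*h) * e2 + (y*h^2*g) * hsr
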